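/- In the min-plus traffic model with dynamics x_i^{k+1} = min(v + x_i^k, x_{i+1}^k − σ) (circularly, with x_{n+1}^k interpreted as x_1^k + m), suppose the initial configuration satisfies 0 ≤ x_1^0 and x_{i+1}^0 − x_i^0 ≥ σ for all i (and x_1^0 + m − x_n^0 ≥ σ). Then for all k, the configuration x^k satisfies the same ordering and safety constraints: x_{i+1}^k − x_i^k ≥ σ for all i, and each sequence k ↦ x_i^k is nondecreasing. -/
import Mathlib


theorem stmt_16 {n : ℕ} (hn : 1 ≤ n) (v σ m : ℝ) (hv : 0 < v) (hσ : 0 ≤ σ)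
    (hm : (n : ℝ) * σ ≤ m)
    (x : ℕ → Fin n → ℝ)
    (hrec : ∀ k, (∀ i : Fin n, ∀ h : (i : ℕ) + 1 < n,
        x (k + 1) i = min (v + x k i) (x k ⟨(i : ℕ) + 1, h⟩ - σ)) ∧
      x (k + 1) ⟨n - 1, by omega⟩ =
        min (v + x k ⟨n - 1, by omega⟩) (x k ⟨0, by omega⟩ + m - σ))
    (hinit0 : 0 ≤ x 0 ⟨0, by omega⟩)
    (hinit : ∀ i : Fin n, ∀ h : (i : ℕ) + 1 < n, x 0 ⟨(i : ℕ) + 1, h⟩ - x 0 i ≥ σ)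
    (hinitc : x 0 ⟨0, by omega⟩ + m - x 0 ⟨n - 1, by omega⟩ ≥ σ) :
    ∀ k : ℕ,
      (∀ i : Fin n, ∀ h : (i : ℕ) + 1 < n, x k ⟨(i : ℕ) + 1, h⟩ - x k i ≥ σ) ∧
      (x k ⟨0, by omega⟩ + m - x k ⟨n - 1, by omega⟩ ≥ σ) ∧
      (∀ i : Fin n, x k i ≤ x (k + 1) i) := by
  have key : ∀ k : ℕ,
      (∀ i : Fin n, ∀ h : (i : ℕ) + 1 < n, x k ⟨(i : ℕ) + 1, h⟩ - x k i ≥ σ) ∧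
      (x k ⟨0, by omega⟩ + m - x k ⟨n - 1, by omega⟩ ≥ σ) := by
    intro k
    induction k with
    | zero => exact ⟨hinit, hinitc⟩
    | succ k ih =>
      obtain ⟨hg, hw⟩ := ih
      obtain ⟨hr, hrl⟩ := hrec k
      -- monotonicity at step k
      have mono : ∀ i : Fin n, x k i ≤ x (k + 1) i := by
        intro i
        by_cases h : (i : ℕ) + 1 < n
        · rw [hr i h]
          have hgi := hg i h
          exact le_min (by linarith) (by linarith)
        · have hieq : i = ⟨n - 1, by omega⟩ := by
            ext; simp; omega
          rw [hieq, hrl]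
          rw [hieq] at *
          exact le_min (by linarith) (by linarith)
      constructor
      · intro i h
        have hgi := hg i h
        have hle1 : x (k + 1) i ≤ v + x k i := by rw [hr i h]; exact min_le_left _ _
        have hle2 : x (k + 1) i ≤ x k ⟨(i : ℕ) + 1, h⟩ - σ := by
          rw [hr i h]; exact min_le_right _ _
        by_cases h2 : (i : ℕ) + 1 + 1 < n
        · rw [hr ⟨(i : ℕ) + 1, h⟩ h2]
          have hgi1 := hg ⟨(i : ℕ) + 1, h⟩ h2
          rw [ge_iff_le, le_sub_iff_add_le, le_min_iff]
          exact ⟨by linarith, by linarith⟩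
        · have hieq : (⟨(i : ℕ) + 1, h⟩ : Fin n) = ⟨n - 1, by omega⟩ := by
            ext; simp; omega
          rw [hieq, hrl]
          rw [hieq] at hgi hle2
          rw [ge_iff_le, le_sub_iff_add_le, le_min_iff]
          exact ⟨by linarith, by linarith⟩
      · have hle : x (k + 1) ⟨n - 1, by omega⟩ ≤ x k ⟨0, by omega⟩ + m - σ := by
          rw [hrl]; exact min_le_right _ _
        have h0 := mono ⟨0, by omega⟩
        linarith
  intro k
  obtain ⟨hg, hw⟩ := key k
  obtain ⟨hr, hrl⟩ := hrec k
  refine ⟨hg, hw, ?_⟩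
  intro i
  by_cases h : (i : ℕ) + 1 < n
  · rw [hr i h]
    have hgi := hg i h
    exact le_min (by linarith) (by linarith)
  · have hieq : i = ⟨n - 1, by omega⟩ := by ext; simp; omega
    rw [hieq, hrl]
    rw [hieq] at *
    exact le_min (by linarith) (by linarith)
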